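/- For every r > e, the function f(r,φ) = (4 log r)/(π r²) − 2 sin(2φ) log(cos φ + sin φ) + 2φ cos(2φ) − sin(2φ) + (sin φ)/r is negative for all φ in the interval [√(2 log r)/r, π/2]. -/

import Mathlib

open Real

set_option maxHeartbeats 1600000

lemma log_ge_aux (x : ℝ) (hx : 0 ≤ x) : x - x^2/2 ≤ Real.log (1+x) := by
  have key : ∀ t : ℝ, 0 ≤ t → HasDerivAt (fun t : ℝ => Real.log (1+t) - t + t^2/2)
      ((1+t)⁻¹ - 1 + t) t := by
    intro t ht
    have h1 : (0:ℝ) < 1 + t := by linarith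
    have d1 : HasDerivAt (fun t : ℝ => Real.log (1+t)) ((1+t)⁻¹) t := by
      have := ((hasDerivAt_id t).const_add 1).log h1.ne'
      simpa using this
    have d2 : HasDerivAt (fun t : ℝ => t^2/2) t t := by
      simpa using ((hasDerivAt_pow 2 t).div_const 2)
    exact (d1.sub (hasDerivAt_id t)).add d2
  have h : MonotoneOn (fun t : ℝ => Real.log (1+t) - t + t^2/2) (Set.Ici 0) := by
    apply monotoneOn_of_deriv_nonneg (convex_Ici 0)
    · intro t ht
      exact ((key t ht).continuousAt).continuousWithinAt
    · intro t ht
      simp only [interior_Ici, Set.mem_Ioi] at ht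
      exact ((key t ht.le).differentiableAt).differentiableWithinAt
    · intro t ht
      simp only [interior_Ici, Set.mem_Ioi] at ht
      rw [(key t ht.le).deriv]
      have h1 : (0:ℝ) < 1 + t := by linarith
      have : (1+t)⁻¹ - 1 + t = t^2 / (1+t) := by
        field_simp; ring
      rw [this]
      positivity
  have := h (Set.mem_Ici.2 le_rfl) (Set.mem_Ici.2 hx) hx
  simp only [add_zero, Real.log_one] at this
  nlinarith [this]

lemma lemE1 (φ s : ℝ) (h0 : 0 ≤ φ) (h1 : φ ≤ 1) (hs0 : 0 ≤ s)
    (hs_le : s ≤ φ) (hs_ge : φ - φ^3/6 - φ^4*(5/96) ≤ s) :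
    2*φ - 4*φ*s^2 - 2*s + 5*s^3 - 4*s^2 + 4*φ^2 - 2*φ^3 ≤ 0 := by
  have ha : 0 ≤ φ - s := sub_nonneg.2 hs_le
  have hb : 0 ≤ s - (φ - φ^3/6 - φ^4*(5/96)) := sub_nonneg.2 hs_ge
  rcases le_or_gt φ 0.3 with hc | hc
  · nlinarith [mul_nonneg ha hb, mul_nonneg (mul_nonneg ha h0) h0, mul_nonneg ha ha,
      mul_nonneg (mul_nonneg ha ha) ha, mul_nonneg (mul_nonneg hb h0) h0,
      mul_nonneg (sub_nonneg.2 hc) (mul_nonneg ha h0), mul_nonneg h0 hs0,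
      mul_nonneg (sub_nonneg.2 hc) (mul_nonneg h0 h0)]
  · rcases le_or_gt φ 0.6 with hd | hd
    · have hc' : (0.3:ℝ) ≤ φ := hc.le
      nlinarith [mul_nonneg ha hb, mul_nonneg (mul_nonneg ha h0) h0, mul_nonneg ha ha,
        mul_nonneg (mul_nonneg ha ha) ha, mul_nonneg (mul_nonneg hb h0) h0,
        mul_nonneg (sub_nonneg.2 hd) (mul_nonneg ha h0), mul_nonneg h0 hs0,
        mul_nonneg (sub_nonneg.2 hc') (sub_nonneg.2 hd),
        mul_nonneg (sub_nonneg.2 hd) (mul_nonneg h0 h0)]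
    · have hd' : (0.6:ℝ) ≤ φ := hd.le
      nlinarith [mul_nonneg ha hb, mul_nonneg (mul_nonneg ha h0) h0, mul_nonneg ha ha,
        mul_nonneg (mul_nonneg ha ha) ha, mul_nonneg (mul_nonneg hb h0) h0,
        mul_nonneg (sub_nonneg.2 h1) (mul_nonneg ha h0), mul_nonneg h0 hs0,
        mul_nonneg (sub_nonneg.2 hd') (sub_nonneg.2 h1),
        mul_nonneg (sub_nonneg.2 h1) (mul_nonneg h0 h0)]

lemma lemE2 (φ s : ℝ) (h0 : 0 ≤ φ) (h1 : φ ≤ 0.9) (hs0 : 0 ≤ s)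
    (hs_le : s ≤ φ) (hs_ge : φ - φ^3/6 - φ^4*(5/96) ≤ s) :
    2*φ - 4*φ*s^2 - 2*s + 8*s^3 - 4*s^2 - 4*s^4 - 3*s*φ^2 + 4*s^2*φ^2 + 4*φ^2 - 2*φ^3 ≤ 0 := by
  have ha : 0 ≤ φ - s := sub_nonneg.2 hs_le
  have hb : 0 ≤ s - (φ - φ^3/6 - φ^4*(5/96)) := sub_nonneg.2 hs_ge
  rcases le_or_gt φ 0.3 with hc | hc
  · nlinarith [mul_nonneg ha hb, mul_nonneg (mul_nonneg ha h0) h0, mul_nonneg ha ha,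
      mul_nonneg (mul_nonneg ha ha) ha, mul_nonneg (mul_nonneg hb h0) h0,
      mul_nonneg (sub_nonneg.2 hc) (mul_nonneg ha h0), mul_nonneg h0 hs0,
      mul_nonneg (sub_nonneg.2 hc) (mul_nonneg h0 h0)]
  · rcases le_or_gt φ 0.6 with hd | hd
    · have hc' : (0.3:ℝ) ≤ φ := hc.le
      nlinarith [mul_nonneg ha hb, mul_nonneg (mul_nonneg ha h0) h0, mul_nonneg ha ha,
        mul_nonneg (mul_nonneg ha ha) ha, mul_nonneg (mul_nonneg hb h0) h0,
        mul_nonneg (sub_nonneg.2 hd) (mul_nonneg ha h0), mul_nonneg h0 hs0,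
        mul_nonneg (sub_nonneg.2 hc') (sub_nonneg.2 hd),
        mul_nonneg (sub_nonneg.2 hd) (mul_nonneg h0 h0)]
    · have hd' : (0.6:ℝ) ≤ φ := hd.le
      nlinarith [mul_nonneg ha hb, mul_nonneg (mul_nonneg ha h0) h0, mul_nonneg ha ha,
        mul_nonneg (mul_nonneg ha ha) ha, mul_nonneg (mul_nonneg hb h0) h0,
        mul_nonneg (sub_nonneg.2 h1) (mul_nonneg ha h0), mul_nonneg h0 hs0,
        mul_nonneg (sub_nonneg.2 hd') (sub_nonneg.2 h1),
        mul_nonneg (sub_nonneg.2 h1) (mul_nonneg h0 h0)]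

lemma lemRB (φ c : ℝ) (h1 : 0.9 ≤ φ) (h2 : φ ≤ 1.5708) (hc0 : 0 ≤ c) (hc : c ≤ 1.5708 - φ) :
    4*φ*c^2 - 2*φ - 2*c + 5*c^3 - 4*c^2 + 4*φ^2 - 2*φ^3 ≤ 0 := by
  nlinarith [mul_nonneg hc0 (sub_nonneg.2 hc), sq_nonneg c, sq_nonneg (φ-1),
    mul_nonneg (sub_nonneg.2 h1) hc0, sq_nonneg (1.5708-φ),
    mul_nonneg (mul_nonneg hc0 hc0) (sub_nonneg.2 hc),
    mul_nonneg (sub_nonneg.2 h1) (sq_nonneg (1-φ))]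

lemma key_ineq (φ : ℝ) (h0 : 0 ≤ φ) (hpi : φ ≤ π/2) :
    2*φ*Real.cos (2*φ) - Real.sin (2*φ)
      - 2*Real.sin (2*φ)*Real.log (Real.cos φ + Real.sin φ) ≤ -4*φ^2 + 2*φ^3 := by
  have pi_lb := Real.pi_gt_d6
  have pi_ub := Real.pi_lt_d6
  set s := Real.sin φ with hs
  set c := Real.cos φ with hc
  have hsc : s^2 + c^2 = 1 := Real.sin_sq_add_cos_sq φ
  have hs0 : 0 ≤ s := Real.sin_nonneg_of_nonneg_of_le_pi h0 (by linarith)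
  have hc0 : 0 ≤ c := Real.cos_nonneg_of_mem_Icc ⟨by linarith, hpi⟩
  have hcs1 : 1 ≤ c + s := by nlinarith
  have hlog : (c+s-1) - (c+s-1)^2/2 ≤ Real.log (c+s) := by
    have h := log_ge_aux (c+s-1) (by linarith)
    have e : 1 + (c+s-1) = c + s := by ring
    rwa [e] at h
  have hsin2 : Real.sin (2*φ) = 2*(s*c) := by rw [Real.sin_two_mul]; ring
  have hcos2 : Real.cos (2*φ) = c^2 - s^2 := Real.cos_two_mul' φ
  have hsc0 : 0 ≤ 2*(s*c) := by positivity
  have hmain : 2*φ*(c^2-s^2) - 2*(s*c) - 2*(2*(s*c))*((c+s-1) - (c+s-1)^2/2)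
      ≤ -4*φ^2 + 2*φ^3 := by
    have hc2 : c^2 = 1 - s^2 := by linarith
    rcases le_or_gt φ 0.9 with h9 | h9
    · -- case A : use sin bounds
      have hs_le : s ≤ φ := Real.sin_le h0
      have habs : |φ| ≤ 1 := by rw [abs_of_nonneg h0]; linarith
      have hsb := abs_sub_le_iff.1 (Real.sin_bound habs)
      rw [abs_of_nonneg h0] at hsb
      have hs_ge : φ - φ^3/6 - φ^4*(5/96) ≤ s := by
        have := hsb.2
        nlinarith [this]
      have hs1 : s ≤ 1 := by nlinarith
      rcases le_or_gt s 0.75 with hs34 | hs34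
      · -- coefficient of c nonneg, use c ≤ 1 - s^2/2
        have hcub : c ≤ 1 - s^2/2 := by nlinarith [sq_nonneg (s^2), sq_nonneg c]
        have hcoef : 0 ≤ 6*s - 8*s^2 := by nlinarith
        have hE1 := lemE1 φ s h0 (by linarith) hs0 hs_le hs_ge
        nlinarith [mul_le_mul_of_nonneg_left hcub hcoef]
      · -- coefficient of c negative, use c ≥ 1 - φ^2/2
        have hc_ge : 1 - φ^2/2 ≤ c := Real.one_sub_sq_div_two_le_cos
        have hcoef : 6*s - 8*s^2 ≤ 0 := by nlinarith
        have hE2 := lemE2 φ s h0 h9 hs0 hs_le hs_ge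
        nlinarith [mul_le_mul_of_nonpos_left hc_ge hcoef]
    · -- case B : φ near π/2
      have hs2 : s^2 = 1 - c^2 := by linarith
      have hψ0 : 0 ≤ π/2 - φ := by linarith
      have hcψ : c = Real.sin (π/2 - φ) := by rw [Real.sin_pi_div_two_sub]
      have hc_le : c ≤ π/2 - φ := by rw [hcψ]; exact Real.sin_le hψ0
      have hc_le' : c ≤ 1.5708 - φ := by nlinarith
      have hcoef : 0 ≤ 6*c - 8*c^2 := by nlinarith
      have hsub : s ≤ 1 - c^2/2 := by nlinarith [sq_nonneg (c^2), sq_nonneg s]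
      have hRB := lemRB φ c (by linarith) (by nlinarith) hc0 hc_le'
      nlinarith [mul_le_mul_of_nonneg_left hsub hcoef]
  calc 2*φ*Real.cos (2*φ) - Real.sin (2*φ)
        - 2*Real.sin (2*φ)*Real.log (Real.cos φ + Real.sin φ)
      ≤ 2*φ*(c^2-s^2) - 2*(s*c) - 2*(2*(s*c))*((c+s-1) - (c+s-1)^2/2) := by
        rw [hsin2, hcos2]
        nlinarith [mul_le_mul_of_nonneg_left hlog hsc0]
    _ ≤ -4*φ^2 + 2*φ^3 := hmain

theorem stmt_2 (r : ℝ) (hr : Real.exp 1 < r) (φ : ℝ)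
    (hφ : φ ∈ Set.Icc (Real.sqrt (2 * Real.log r) / r) (π / 2)) :
    4 * Real.log r / (π * r ^ 2)
      - 2 * Real.sin (2 * φ) * Real.log (Real.cos φ + Real.sin φ)
      + 2 * φ * Real.cos (2 * φ) - Real.sin (2 * φ) + Real.sin φ / r < 0 := by
  obtain ⟨hφ1, hφ2⟩ := hφ
  have he1 : (2.7182818283:ℝ) < Real.exp 1 := Real.exp_one_gt_d9
  have hr0 : (0:ℝ) < r := lt_trans (by linarith) hr
  have pi_lb := Real.pi_gt_d6
  have pi_ub := Real.pi_lt_d6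
  set t := Real.log r with ht
  have ht1 : 1 < t := (Real.lt_log_iff_exp_lt hr0).2 (by simpa using hr)
  set u := Real.sqrt (2*t) with hu
  have hu0 : 0 ≤ u := Real.sqrt_nonneg _
  have hu2 : u^2 = 2*t := Real.sq_sqrt (by linarith)
  have hu1 : 1 ≤ u := by nlinarith
  have hφ0 : 0 < φ := lt_of_lt_of_le (by positivity) hφ1
  -- key trig inequality
  have hK := key_ineq φ hφ0.le hφ2
  -- remains: 4t/(π r²) + sin φ / r < 4φ² - 2φ³
  have harith : 4*t/(π*r^2) + Real.sin φ / r < 4*φ^2 - 2*φ^3 := by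
    have hπ0 : (0:ℝ) < π := by linarith
    have hr2 : (0:ℝ) < r^2 := by positivity
    rcases le_or_gt φ 0.5 with hhalf | hhalf
    · have hsin : Real.sin φ ≤ φ := Real.sin_le hφ0.le
      have hφr : u ≤ φ * r := by
        rw [div_le_iff₀ hr0] at hφ1; linarith
      have h4t : 4*t/π < u^2 := by
        rw [div_lt_iff₀ hπ0]
        nlinarith
      have key : 4*t/(π*r^2) + φ/r < 3*φ^2 := by
        have e1 : 4*t/(π*r^2) + φ/r = (4*t/π + φ*r)/r^2 := by
          field_simp
        have e2 : 3*φ^2 = (3*(φ*r)^2)/r^2 := by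
          field_simp
        rw [e1, e2, div_lt_div_iff_of_pos_right hr2]
        nlinarith [mul_le_mul_of_nonneg_left hφr hu0]
      have hsr : Real.sin φ / r ≤ φ / r := (div_le_div_iff_of_pos_right hr0).2 hsin
      nlinarith [hsr, key]
    · -- φ > 1/2
      have hsin : Real.sin φ ≤ 1 := Real.sin_le_one φ
      have hre : (2.718:ℝ) < r := by linarith
      have hsr : Real.sin φ / r ≤ 1 / r := (div_le_div_iff_of_pos_right hr0).2 hsin
      have h1r : (1:ℝ)/r < 0.37 := by
        rw [div_lt_iff₀ hr0]; nlinarith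
      have htr : t ≤ r / Real.exp 1 := by
        have h := Real.log_le_sub_one_of_pos (x := r / Real.exp 1) (by positivity)
        rw [Real.log_div (ne_of_gt hr0) (ne_of_gt (Real.exp_pos 1)), Real.log_exp] at h
        linarith
      have htr2 : t * Real.exp 1 ≤ r := (le_div_iff₀ (Real.exp_pos 1)).1 htr
      have hA : 4*t/(π*r^2) < 0.18 := by
        rw [div_lt_iff₀ (by positivity)]
        have e27 : (2.718:ℝ) < Real.exp 1 := by linarith
        have step1 : 4*t*2.718 < 4*r := by nlinarith [htr2, e27]
        have step2 : 0.5654*r^2 < 0.18*(π*r^2) := by linarith [mul_lt_mul_of_pos_right pi_lb hr2]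
        have step3 : 1.472*r < 0.5654*r^2 := by nlinarith [hr0, hre]
        linarith [step1, step2, step3]
      have hpoly : (0.55:ℝ) ≤ 4*φ^2 - 2*φ^3 := by
        have hφub : φ ≤ 1.5708 := by nlinarith
        nlinarith [mul_nonneg (sub_nonneg.2 hhalf.le) (sub_nonneg.2 hφub),
          sq_nonneg (φ - 0.5)]
      have : Real.sin φ / r < 0.37 := by
        calc Real.sin φ / r ≤ 1/r := hsr
          _ < 0.37 := h1r
      linarith
  linarith [hK, harith]
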